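/- Let (Ω, 𝔉, P) be a probability space, n ≥ 1, and for each t ∈ ℕ let β^t : Ω → ℝⁿ be a measurable random vector. Let I₊ ⊆ {1,…,n} and let β* ∈ ℝⁿ satisfy β*_i = 1 for i ∈ I₊ and β*_i < 1 for i ∉ I₊. Assume: (a) for each i ∈ I₊, √t (β^t_i − 1) → 0 in probability as t → ∞; (b) for each i ∉ I₊, β^t_i → β*_i in probability; and (c) (δ_t) is a sequence of positive reals with δ_t → 0 and √t · δ_t → c for some constant c ∈ (0, ∞). Define the estimated index set Î₊(ω) = {i : β^t_i(ω) > 1 − δ_t}. Then P(Î₊ = I₊) → 1 as t → ∞. -/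

import Mathlib

open MeasureTheory Filter

/-- Consistency of the estimated active set: if `√t(β^t_i − 1) → 0`
in probability for `i ∈ I₊`, `β^t_i → β*_i < 1` in probability for `i ∉ I₊`, and
`δ_t → 0` with `√t δ_t → c ∈ (0,∞)`, then
`P({i : β^t_i > 1 − δ_t} = I₊) → 1`. -/
theorem stmt13 {n : ℕ} (hn : 1 ≤ n)
    {Ω : Type*} [MeasurableSpace Ω] (P : Measure Ω) [IsProbabilityMeasure P]
    (βt : ℕ → Ω → Fin n → ℝ)
    (hmeas : ∀ t, Measurable (βt t))
    (Iplus : Finset (Fin n)) (βstar : Fin n → ℝ)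
    (hβstar_on : ∀ i ∈ Iplus, βstar i = 1)
    (hβstar_off : ∀ i ∉ Iplus, βstar i < 1)
    (ha : ∀ i ∈ Iplus, ∀ ε : ℝ, 0 < ε →
      Tendsto (fun t : ℕ => P {ω | ε ≤ |Real.sqrt t * (βt t ω i - 1)|}) atTop (nhds 0))
    (hb : ∀ i ∉ Iplus, ∀ ε : ℝ, 0 < ε →
      Tendsto (fun t : ℕ => P {ω | ε ≤ |βt t ω i - βstar i|}) atTop (nhds 0))
    (δ : ℕ → ℝ) (hδpos : ∀ t, 0 < δ t)
    (hδ0 : Tendsto δ atTop (nhds 0))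
    (c : ℝ) (hc : 0 < c)
    (hδc : Tendsto (fun t : ℕ => Real.sqrt t * δ t) atTop (nhds c)) :
    Tendsto (fun t : ℕ =>
        P {ω | {i : Fin n | 1 - δ t < βt t ω i} = (Iplus : Set (Fin n))})
      atTop (nhds 1) := by
  classical
  -- the "bad" event for each coordinate
  set B : Fin n → ℕ → Set Ω := fun i t =>
    if i ∈ Iplus then {ω | βt t ω i ≤ 1 - δ t} else {ω | 1 - δ t < βt t ω i} with hB
  set A : ℕ → Set Ω := fun t =>
    {ω | {i : Fin n | 1 - δ t < βt t ω i} = (Iplus : Set (Fin n))} with hA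
  have hmeasi : ∀ t (i : Fin n), Measurable fun ω => βt t ω i := fun t i =>
    (measurable_pi_apply i).comp (hmeas t)
  have hAmeas : ∀ t, MeasurableSet (A t) := by
    intro t
    have hrw : A t = ⋂ i : Fin n, {ω | 1 - δ t < βt t ω i ↔ i ∈ Iplus} := by
      ext ω
      simp only [hA, Set.mem_setOf_eq, Set.mem_iInter, Set.ext_iff, Finset.mem_coe,
        Set.mem_setOf_eq]
    rw [hrw]
    refine MeasurableSet.iInter fun i => ?_
    by_cases hi : i ∈ Iplus
    · simp only [hi, iff_true]
      exact measurableSet_lt measurable_const (hmeasi t i)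
    · simp only [hi, iff_false, not_lt]
      exact measurableSet_le (hmeasi t i) measurable_const
  -- complement is covered by the union of bad events
  have hcover : ∀ t, (A t)ᶜ ⊆ ⋃ i : Fin n, B i t := by
    intro t ω hω
    simp only [hA, Set.mem_compl_iff, Set.mem_setOf_eq, Set.ext_iff, not_forall] at hω
    obtain ⟨i, hi⟩ := hω
    simp only [Set.mem_setOf_eq, Finset.mem_coe] at hi
    refine Set.mem_iUnion.2 ⟨i, ?_⟩
    by_cases hmem : i ∈ Iplus
    · have hle : ¬ (1 - δ t < βt t ω i) := fun h => hi (iff_of_true h hmem)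
      simp only [hB, hmem, if_pos, Set.mem_setOf_eq]
      exact not_lt.1 hle
    · have hgt : 1 - δ t < βt t ω i := by
        by_contra h
        exact hi (iff_of_false h hmem)
      simp only [hB, hmem, if_neg, Set.mem_setOf_eq, not_false_iff]
      exact hgt
  -- every bad event has vanishing probability
  have hBtend : ∀ i : Fin n, Tendsto (fun t => P (B i t)) atTop (nhds 0) := by
    intro i
    by_cases hmem : i ∈ Iplus
    · -- use (a) with ε = c/2
      have h2 : (0:ℝ) < c / 2 := by linarith
      have hev : ∀ᶠ t : ℕ in atTop, c / 2 ≤ Real.sqrt t * δ t :=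
        Filter.Tendsto.eventually_const_le (by linarith) hδc
      have hle : ∀ᶠ t : ℕ in atTop,
          P (B i t) ≤ P {ω | c / 2 ≤ |Real.sqrt t * (βt t ω i - 1)|} := by
        filter_upwards [hev] with t ht
        refine measure_mono fun ω hω => ?_
        simp only [hB, hmem, if_pos, Set.mem_setOf_eq] at hω ⊢
        have hsq : (0:ℝ) ≤ Real.sqrt t := Real.sqrt_nonneg _
        have h1 : Real.sqrt t * (βt t ω i - 1) ≤ -(Real.sqrt t * δ t) := by
          have := mul_le_mul_of_nonneg_left (show βt t ω i - 1 ≤ -(δ t) by linarith) hsq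
          nlinarith
        refine le_abs.2 (Or.inr ?_)
        linarith
      exact tendsto_of_tendsto_of_tendsto_of_le_of_le'
        tendsto_const_nhds (ha i hmem (c / 2) h2)
        (Eventually.of_forall fun t => zero_le) hle
    · -- use (b) with ε = (1 - βstar i)/2
      have hlt := hβstar_off i hmem
      set ε : ℝ := (1 - βstar i) / 2 with hε
      have hεpos : 0 < ε := by simp only [hε]; linarith
      have hev : ∀ᶠ t : ℕ in atTop, δ t < ε :=
        Filter.Tendsto.eventually_lt_const hεpos hδ0
      have hle : ∀ᶠ t : ℕ in atTop,
          P (B i t) ≤ P {ω | ε ≤ |βt t ω i - βstar i|} := by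
        filter_upwards [hev] with t ht
        refine measure_mono fun ω hω => ?_
        simp only [hB, hmem, if_neg, Set.mem_setOf_eq, not_false_iff] at hω ⊢
        refine le_abs.2 (Or.inl ?_)
        simp only [hε] at ht ⊢
        linarith
      exact tendsto_of_tendsto_of_tendsto_of_le_of_le'
        tendsto_const_nhds (hb i hmem ε hεpos)
        (Eventually.of_forall fun t => zero_le) hle
  -- probability of the complement tends to 0
  have hcompl : Tendsto (fun t => P (A t)ᶜ) atTop (nhds 0) := by
    have hsum : Tendsto (fun t => ∑ i : Fin n, P (B i t)) atTop (nhds 0) := by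
      have := tendsto_finset_sum (Finset.univ : Finset (Fin n))
        (fun i _ => hBtend i)
      simpa using this
    refine tendsto_of_tendsto_of_tendsto_of_le_of_le'
      tendsto_const_nhds hsum
      (Eventually.of_forall fun t => zero_le)
      (Eventually.of_forall fun t => ?_)
    calc P (A t)ᶜ ≤ P (⋃ i : Fin n, B i t) := measure_mono (hcover t)
      _ ≤ ∑' i : Fin n, P (B i t) := measure_iUnion_le _
      _ = ∑ i : Fin n, P (B i t) := tsum_fintype _
  -- conclude
  have hAeq : ∀ t, P (A t) = 1 - P (A t)ᶜ := by
    intro t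
    have h := prob_compl_eq_one_sub (μ := P) (hAmeas t).compl
    rwa [compl_compl] at h
  have : Tendsto (fun t => 1 - P (A t)ᶜ) atTop (nhds (1 - 0)) :=
    ENNReal.Tendsto.sub tendsto_const_nhds hcompl (Or.inl ENNReal.one_ne_top)
  simp only [tsub_zero] at this
  refine Tendsto.congr (fun t => (hAeq t).symm) this
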